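/- Let m ≥ 2, let H ≤ Sym(m) be transitive, and let K be a closed subgroup of the iterated wreath product W_H. For G_K = ⟨H, D_m(K)⟩ one has St_{G_K}(1) = D_m(K) and, for every n ≥ 1, log|G_K : St_{G_K}(n)| = log|H| + log|K : St_K(n−1)|. Consequently hdim_{W_H}(G_K) = hdim_{W_H}(K)/m, and if K has strong Hausdorff dimension in W_H then so does G_K. -/

import Mathlib

open Filter Topology

/-- Vertices of the `m`-adic rooted tree: finite words over an alphabet of size `m`. -/
abbrev Vtx (m : ℕ) := List (Fin m)

/-- The iterated wreath product `W_H ≤ Aut T`: permutations `f` of the vertex set that fix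
the root and such that at every vertex `v` there is a local permutation `σ ∈ H` with
`f (v ++ [x]) = f v ++ [σ x]` for every letter `x`.  (This encodes exactly the automorphisms
of the `m`-adic tree whose local permutation at every vertex lies in `H`.) -/
def wreath (m : ℕ) (H : Subgroup (Equiv.Perm (Fin m))) : Subgroup (Equiv.Perm (Vtx m)) where
  carrier := {f | f [] = [] ∧
    ∀ v : Vtx m, ∃ σ ∈ H, ∀ x : Fin m, f (v ++ [x]) = f v ++ [σ x]}
  one_mem' := ⟨rfl, fun _ => ⟨1, H.one_mem, fun _ => rfl⟩⟩
  mul_mem' := by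
    rintro f g ⟨hf0, hf⟩ ⟨hg0, hg⟩
    refine ⟨?_, fun v => ?_⟩
    · show f (g []) = []
      rw [hg0, hf0]
    · obtain ⟨τ, hτ, hτ'⟩ := hg v
      obtain ⟨σ, hσ, hσ'⟩ := hf (g v)
      refine ⟨σ * τ, H.mul_mem hσ hτ, fun x => ?_⟩
      show f (g (v ++ [x])) = f (g v) ++ [σ (τ x)]
      rw [hτ' x, hσ' (τ x)]
  inv_mem' := by
    rintro f ⟨hf0, hf⟩
    refine ⟨?_, fun v => ?_⟩
    · calc (f⁻¹ : Equiv.Perm (Vtx m)) [] = f⁻¹ (f []) := by rw [hf0]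
        _ = [] := f.symm_apply_apply []
    · obtain ⟨σ, hσ, hσ'⟩ := hf (f⁻¹ v)
      refine ⟨σ⁻¹, H.inv_mem hσ, fun x => ?_⟩
      apply Equiv.injective f
      rw [show ∀ y, f (f⁻¹ y) = y from f.apply_symm_apply, hσ' (σ⁻¹ x),
        show ∀ y, f (f⁻¹ y) = y from f.apply_symm_apply,
        show ∀ y, σ (σ⁻¹ y) = y from σ.apply_symm_apply]

/-- The pointwise stabilizer (in the full permutation group of the vertex set)
of the vertices of the first `n` levels of the tree. -/
def levelStab (m n : ℕ) : Subgroup (Equiv.Perm (Vtx m)) :=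
  ⨅ v ∈ {v : Vtx m | v.length ≤ n}, MulAction.stabilizer (Equiv.Perm (Vtx m)) v

/-- The Hausdorff dimension of `X` in `G` with respect to the level-stabilizer filtration:
`hdimIn m G X = liminf_n log|X : St_X(n)| / log|G : St_G(n)|`. -/
noncomputable def hdimIn (m : ℕ) (G X : Subgroup (Equiv.Perm (Vtx m))) : ℝ :=
  Filter.liminf (fun n : ℕ =>
    Real.log ((levelStab m n).relIndex X) / Real.log ((levelStab m n).relIndex G)) Filter.atTop

/-- `X` has strong Hausdorff dimension `α` in `G` if the sequence
`log|X : St_X(n)| / log|G : St_G(n)|` converges to `α` (a proper limit). -/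
def hasStrongHdim (m : ℕ) (G X : Subgroup (Equiv.Perm (Vtx m))) (α : ℝ) : Prop :=
  Filter.Tendsto (fun n : ℕ =>
    Real.log ((levelStab m n).relIndex X) / Real.log ((levelStab m n).relIndex G))
    Filter.atTop (nhds α)

/-- The closure of a subgroup of `Aut T` in the profinite (congruence) topology:
`cl(G) = ⋂_n G · St(n)`. -/
def treeClosure (m : ℕ) (G : Subgroup (Equiv.Perm (Vtx m))) : Subgroup (Equiv.Perm (Vtx m)) :=
  ⨅ n : ℕ, G ⊔ levelStab m n

/-- A subgroup of `Aut T` is closed (in the profinite topology) iff it equals its closure. -/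
def IsTreeClosed (m : ℕ) (G : Subgroup (Equiv.Perm (Vtx m))) : Prop :=
  treeClosure m G = G

/-- `G` acts transitively on every level of the tree. -/
def LevelTransitive (m : ℕ) (G : Subgroup (Equiv.Perm (Vtx m))) : Prop :=
  ∀ u v : Vtx m, u.length = v.length → ∃ g ∈ G, g u = v

/-- `G` is self-similar: the section of any `g ∈ G` at any vertex `v` again belongs to `G`,
i.e. there is `h ∈ G` with `g (v ++ u) = g v ++ h u` for all words `u`. -/
def SelfSimilar (m : ℕ) (G : Subgroup (Equiv.Perm (Vtx m))) : Prop :=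
  ∀ g ∈ G, ∀ v : Vtx m, ∃ h ∈ G, ∀ u : Vtx m, g (v ++ u) = g v ++ h u

/-- The rigid vertex stabilizer of `v` in `G`: elements of `G` fixing `v` and every vertex
outside the subtree rooted at `v`. -/
def rist (m : ℕ) (G : Subgroup (Equiv.Perm (Vtx m))) (v : Vtx m) :
    Subgroup (Equiv.Perm (Vtx m)) :=
  G ⊓ ⨅ u ∈ {u : Vtx m | u = v ∨ ¬ v <+: u}, MulAction.stabilizer (Equiv.Perm (Vtx m)) u

/-- The rigid level stabilizer `Rist_G(n)`: the (internal direct) product of the rigid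
vertex stabilizers of the vertices at level `n`, i.e. the subgroup they generate. -/
def RistL (m : ℕ) (G : Subgroup (Equiv.Perm (Vtx m))) (n : ℕ) :
    Subgroup (Equiv.Perm (Vtx m)) :=
  ⨆ v ∈ {v : Vtx m | v.length = n}, rist m G v

/-- `N` is a normal subgroup of `G` (both given as subgroups of an ambient group). -/
def NormalIn {X : Type*} [Group X] (N G : Subgroup X) : Prop :=
  N ≤ G ∧ ∀ g ∈ G, ∀ x ∈ N, g * x * g⁻¹ ∈ N

/-- The rooted automorphism associated to `σ`: it permutes the first letter by `σ` and is
trivial elsewhere. -/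
def rootedPerm (m : ℕ) (σ : Equiv.Perm (Fin m)) : Equiv.Perm (Vtx m) where
  toFun v := match v with
    | [] => []
    | x :: w => σ x :: w
  invFun v := match v with
    | [] => []
    | x :: w => σ⁻¹ x :: w
  left_inv v := by cases v with
    | nil => rfl
    | cons x w => simp
  right_inv v := by cases v with
    | nil => rfl
    | cons x w => simp

/-- The embedding `H → W_H` by rooted automorphisms, as a group homomorphism. -/
def rootedHom (m : ℕ) : Equiv.Perm (Fin m) →* Equiv.Perm (Vtx m) where
  toFun := rootedPerm m
  map_one' := by
    ext v
    cases v <;> rfl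
  map_mul' σ τ := by
    ext v
    cases v <;> rfl

/-- `D_m(K)`: the preimage under the first-level section map `ψ` of the diagonal copy
`{(k,…,k) : k ∈ K}`, i.e. those `f` fixing the first level whose section at every
first-level vertex is one and the same element `k ∈ K`. -/
def diagSub (m : ℕ) (K : Subgroup (Equiv.Perm (Vtx m))) : Subgroup (Equiv.Perm (Vtx m)) where
  carrier := {f | f [] = [] ∧ ∃ k ∈ K, ∀ (x : Fin m) (u : Vtx m), f (x :: u) = x :: k u}
  one_mem' := ⟨rfl, 1, K.one_mem, fun _ _ => rfl⟩
  mul_mem' := by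
    rintro f g ⟨hf0, kf, hkf, hf⟩ ⟨hg0, kg, hkg, hg⟩
    refine ⟨?_, kf * kg, K.mul_mem hkf hkg, fun x u => ?_⟩
    · show f (g []) = []
      rw [hg0, hf0]
    · show f (g (x :: u)) = x :: kf (kg u)
      rw [hg x u, hf x (kg u)]
  inv_mem' := by
    rintro f ⟨hf0, k, hk, hf⟩
    refine ⟨?_, k⁻¹, K.inv_mem hk, fun x u => ?_⟩
    · calc (f⁻¹ : Equiv.Perm (Vtx m)) [] = f⁻¹ (f []) := by rw [hf0]
        _ = [] := f.symm_apply_apply []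
    · apply Equiv.injective f
      rw [show ∀ y, f (f⁻¹ y) = y from f.apply_symm_apply, hf x (k⁻¹ u),
        show ∀ y, k (k⁻¹ y) = y from k.apply_symm_apply]

/-- The group `G_K = ⟨H, D_m(K)⟩`, where `H` acts by rooted automorphisms. -/
def diagGroup (m : ℕ) (H : Subgroup (Equiv.Perm (Fin m))) (K : Subgroup (Equiv.Perm (Vtx m))) :
    Subgroup (Equiv.Perm (Vtx m)) :=
  H.map (rootedHom m) ⊔ diagSub m K

/-- The center of a subgroup `G` of an ambient group, as a subgroup of the ambient group. -/
def centerOf {X : Type*} [Group X] (G : Subgroup X) : Subgroup X :=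
  Subgroup.centralizer (G : Set X) ⊓ G

/-- The `G`-orbit of a vertex `v`. -/
def orbitSet (m : ℕ) (G : Subgroup (Equiv.Perm (Vtx m))) (v : Vtx m) : Set (Vtx m) :=
  {w | ∃ g ∈ G, g v = w}

/-- The number of `G`-orbits on the `n`-th level of the tree. -/
noncomputable def numOrbits (m : ℕ) (G : Subgroup (Equiv.Perm (Vtx m))) (n : ℕ) : ℕ :=
  Nat.card {s : Set (Vtx m) // ∃ v : Vtx m, v.length = n ∧ s = orbitSet m G v}

open Filter Topology

namespace St12

open Subgroup List

variable {m : ℕ} {H : Subgroup (Equiv.Perm (Fin m))}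

lemma mem_levelStab_iff {n : ℕ} {f : Equiv.Perm (Vtx m)} :
    f ∈ levelStab m n ↔ ∀ v : Vtx m, v.length ≤ n → f v = v := by
  simp [levelStab, Subgroup.mem_iInf, MulAction.mem_stabilizer_iff, Equiv.Perm.smul_def,
    Set.mem_setOf_eq]

lemma levelStab_antitone {n n' : ℕ} (h : n ≤ n') : levelStab m n' ≤ levelStab m n := by
  intro f hf
  rw [mem_levelStab_iff] at hf ⊢
  exact fun v hv => hf v (hv.trans h)

variable {f : Equiv.Perm (Vtx m)}

lemma wreath_nil (hf : f ∈ wreath m H) : f [] = [] := hf.1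

lemma wreath_length (hf : f ∈ wreath m H) (v : Vtx m) : (f v).length = v.length := by
  induction v using List.reverseRecOn with
  | nil => simp [hf.1]
  | append_singleton v x ih =>
      obtain ⟨σ, -, h⟩ := hf.2 v
      simp [h x, ih]

lemma wreath_prefix (hf : f ∈ wreath m H) (v u : Vtx m) : f v <+: f (v ++ u) := by
  induction u using List.reverseRecOn with
  | nil => simp
  | append_singleton u x ih =>
      obtain ⟨σ, -, h⟩ := hf.2 (v ++ u)
      rw [← List.append_assoc, h x]
      exact ih.trans (List.prefix_append _ _)

lemma exists_rootSec (hf : f ∈ wreath m H) : ∃ σ ∈ H, ∀ x, f [x] = [σ x] := by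
  obtain ⟨σ, hσ, h⟩ := hf.2 []
  exact ⟨σ, hσ, fun x => by simpa [hf.1] using h x⟩

lemma wreath_cons_eq (hf : f ∈ wreath m H) {x : Fin m} (hx : f [x] = [x]) (u : Vtx m) :
    f (x :: u) = x :: (f (x :: u)).tail := by
  have h := wreath_prefix hf [x] u
  rw [hx] at h
  obtain ⟨w, hw⟩ := h
  have h2 : f (x :: u) = x :: w := by simpa using hw.symm
  rw [h2]
  rfl

end St12
namespace St12

open Subgroup

variable {m : ℕ}

/-- `glue σ k` : first letter moved by `σ`, diagonal action of `k` below. -/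
def glue (σ : Equiv.Perm (Fin m)) (k : Equiv.Perm (Vtx m)) : Equiv.Perm (Vtx m) where
  toFun v := match v with
    | [] => []
    | x :: u => σ x :: k u
  invFun v := match v with
    | [] => []
    | x :: u => σ⁻¹ x :: k⁻¹ u
  left_inv v := by cases v with
    | nil => rfl
    | cons x u => simp
  right_inv v := by cases v with
    | nil => rfl
    | cons x u => simp

@[simp] lemma glue_nil (σ : Equiv.Perm (Fin m)) (k : Equiv.Perm (Vtx m)) :
    glue σ k [] = [] := rfl

@[simp] lemma glue_cons (σ : Equiv.Perm (Fin m)) (k : Equiv.Perm (Vtx m)) (x : Fin m)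
    (u : Vtx m) : glue σ k (x :: u) = σ x :: k u := rfl

/-- `ψ₀` as a monoid hom. -/
def psi0 (m : ℕ) : Equiv.Perm (Fin m) × Equiv.Perm (Vtx m) →* Equiv.Perm (Vtx m) where
  toFun p := glue p.1 p.2
  map_one' := Equiv.ext fun v => by cases v <;> rfl
  map_mul' p q := Equiv.ext fun v => by cases v <;> rfl

@[simp] lemma psi0_apply (σ : Equiv.Perm (Fin m)) (k : Equiv.Perm (Vtx m)) :
    psi0 m (σ, k) = glue σ k := rfl

/-- the tuple automorphism: acts on the subtree at `x` by `g x`. -/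
def tup (g : Fin m → Equiv.Perm (Vtx m)) : Equiv.Perm (Vtx m) where
  toFun v := match v with
    | [] => []
    | x :: u => x :: g x u
  invFun v := match v with
    | [] => []
    | x :: u => x :: (g x)⁻¹ u
  left_inv v := by cases v with
    | nil => rfl
    | cons x u => simp
  right_inv v := by cases v with
    | nil => rfl
    | cons x u => simp

@[simp] lemma tup_nil (g : Fin m → Equiv.Perm (Vtx m)) : tup g [] = [] := rfl

@[simp] lemma tup_cons (g : Fin m → Equiv.Perm (Vtx m)) (x : Fin m) (u : Vtx m) :
    tup g (x :: u) = x :: g x u := rfl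

/-- `Θ` as a monoid hom from the direct product. -/
def theta (m : ℕ) : (Fin m → Equiv.Perm (Vtx m)) →* Equiv.Perm (Vtx m) where
  toFun := tup
  map_one' := Equiv.ext fun v => by cases v <;> rfl
  map_mul' g h := Equiv.ext fun v => by cases v <;> rfl

@[simp] lemma theta_apply (g : Fin m → Equiv.Perm (Vtx m)) : theta m g = tup g := rfl

variable {H : Subgroup (Equiv.Perm (Fin m))} {K : Subgroup (Equiv.Perm (Vtx m))}

lemma rootedPerm_mem_wreath {σ : Equiv.Perm (Fin m)} (hσ : σ ∈ H) :
    rootedPerm m σ ∈ wreath m H := by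
  refine ⟨rfl, fun v => ?_⟩
  cases v with
  | nil => exact ⟨σ, hσ, fun x => rfl⟩
  | cons y w => exact ⟨1, H.one_mem, fun x => rfl⟩

lemma glue_eq_mul (σ : Equiv.Perm (Fin m)) (k : Equiv.Perm (Vtx m)) :
    glue σ k = rootedPerm m σ * glue 1 k :=
  Equiv.ext fun v => by cases v <;> rfl

lemma diagGroup_eq_map : diagGroup m H K = (H.prod K).map (psi0 m) := by
  apply le_antisymm
  · apply sup_le
    · rintro _ ⟨σ, hσ, rfl⟩
      exact ⟨(σ, 1), ⟨hσ, K.one_mem⟩, Equiv.ext fun v => by cases v <;> rfl⟩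
    · rintro f ⟨h0, k, hk, hf⟩
      refine ⟨(1, k), ⟨H.one_mem, hk⟩, Equiv.ext fun v => ?_⟩
      cases v with
      | nil => simpa using h0.symm
      | cons x u => simpa using (hf x u).symm
  · rintro _ ⟨⟨σ, k⟩, ⟨hσ, hk⟩, rfl⟩
    rw [psi0_apply, glue_eq_mul]
    exact Subgroup.mul_mem _
      (Subgroup.mem_sup_left ⟨σ, hσ, rfl⟩)
      (Subgroup.mem_sup_right ⟨rfl, k, hk, fun x u => rfl⟩)

lemma comap_psi0_levelStab (hm : 2 ≤ m) (n : ℕ) :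
    (levelStab m (n + 1)).comap (psi0 m) =
      (⊥ : Subgroup (Equiv.Perm (Fin m))).prod (levelStab m n) := by
  ext ⟨σ, k⟩
  simp only [Subgroup.mem_comap, Subgroup.mem_prod, Subgroup.mem_bot, mem_levelStab_iff,
    psi0_apply]
  constructor
  · intro h
    constructor
    · refine Equiv.ext fun x => ?_
      have := h [x] (by simp)
      exact (by simpa using this : σ x = x ∧ k [] = []).1
    · intro u hu
      have x0 : Fin m := ⟨0, by omega⟩
      have := h (x0 :: u) (by simpa using Nat.succ_le_succ hu)
      simp only [glue_cons, List.cons.injEq] at this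
      exact this.2
  · rintro ⟨rfl, hk⟩ v hv
    cases v with
    | nil => rfl
    | cons x u =>
        simp only [List.length_cons, Nat.succ_le_succ_iff] at hv
        simp [hk u hv]

lemma comap_theta_levelStab (n : ℕ) :
    (levelStab m (n + 1)).comap (theta m) =
      Subgroup.pi Set.univ (fun _ : Fin m => levelStab m n) := by
  ext g
  simp only [Subgroup.mem_comap, Subgroup.mem_pi, Set.mem_univ, forall_true_left,
    mem_levelStab_iff, theta_apply]
  constructor
  · intro h x u hu
    have := h (x :: u) (by simpa using Nat.succ_le_succ hu)
    simpa using this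
  · intro h v hv
    cases v with
    | nil => rfl
    | cons x u =>
        simp only [List.length_cons, Nat.succ_le_succ_iff] at hv
        simp [h x u hv]

end St12
namespace St12

open Subgroup

variable {m : ℕ} {H : Subgroup (Equiv.Perm (Fin m))}

lemma map_theta_pi :
    (Subgroup.pi Set.univ fun _ : Fin m => wreath m H).map (theta m) =
      wreath m H ⊓ levelStab m 1 := by
  apply le_antisymm
  · rintro _ ⟨g, hg, rfl⟩
    have hg' : ∀ x, g x ∈ wreath m H := fun x => hg x (Set.mem_univ x)
    rw [Subgroup.mem_inf]
    constructor
    · refine ⟨rfl, fun v => ?_⟩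
      cases v with
      | nil => exact ⟨1, H.one_mem, fun x => by simp [(hg' x).1]⟩
      | cons y w =>
          obtain ⟨σ, hσ, h⟩ := (hg' y).2 w
          exact ⟨σ, hσ, fun x => by simp [h x]⟩
    · rw [mem_levelStab_iff]
      intro v hv
      match v with
      | [] => rfl
      | [x] => simp [(hg' x).1]
      | x :: y :: w => simp at hv
  · intro f hf
    rw [Subgroup.mem_inf] at hf
    obtain ⟨hfW, hf1⟩ := hf
    rw [mem_levelStab_iff] at hf1
    have hfx : ∀ x : Fin m, f [x] = [x] := fun x => hf1 [x] (by simp)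
    have hfW' : f⁻¹ ∈ wreath m H := (wreath m H).inv_mem hfW
    have hfx' : ∀ x : Fin m, f⁻¹ [x] = [x] := fun x => by
      rw [← hfx x, show ∀ y, f⁻¹ (f y) = y from f.symm_apply_apply, hfx x]
    have key : ∀ (x : Fin m) (u : Vtx m), f (x :: u) = x :: (f (x :: u)).tail :=
      fun x u => wreath_cons_eq hfW (hfx x) u
    have key' : ∀ (x : Fin m) (u : Vtx m), f⁻¹ (x :: u) = x :: (f⁻¹ (x :: u)).tail :=
      fun x u => wreath_cons_eq hfW' (hfx' x) u
    refine ⟨fun x =>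
      { toFun := fun u => (f (x :: u)).tail
        invFun := fun u => (f⁻¹ (x :: u)).tail
        left_inv := fun u => ?_
        right_inv := fun u => ?_ }, fun x _ => ⟨?_, fun v => ?_⟩, Equiv.ext fun v => ?_⟩
    · show (f⁻¹ (x :: (f (x :: u)).tail)).tail = u
      conv_lhs => rw [← key x u]
      rw [show ∀ y, f⁻¹ (f y) = y from f.symm_apply_apply]
      rfl
    · show (f (x :: (f⁻¹ (x :: u)).tail)).tail = u
      conv_lhs => rw [← key' x u]
      rw [show ∀ y, f (f⁻¹ y) = y from f.apply_symm_apply]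
      rfl
    · show (f [x]).tail = []
      rw [hfx x]
      rfl
    · obtain ⟨σ, hσ, h⟩ := hfW.2 (x :: v)
      refine ⟨σ, hσ, fun a => ?_⟩
      show (f (x :: (v ++ [a]))).tail = (f (x :: v)).tail ++ [σ a]
      rw [show (x :: (v ++ [a])) = (x :: v) ++ [a] from rfl, h a, key x v]
      simp
    · cases v with
      | nil => exact hfW.1.symm
      | cons x u => exact (key x u).symm

noncomputable def rootSec (f : ↥(wreath m H)) : Equiv.Perm (Fin m) :=
  (exists_rootSec f.2).choose

lemma rootSec_mem (f : ↥(wreath m H)) : rootSec f ∈ H :=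
  (exists_rootSec f.2).choose_spec.1

lemma rootSec_spec (f : ↥(wreath m H)) (x : Fin m) :
    (f : Equiv.Perm (Vtx m)) [x] = [rootSec f x] :=
  (exists_rootSec f.2).choose_spec.2 x

lemma singleton_inj {a b : Fin m} (h : ([a] : Vtx m) = [b]) : a = b := by
  simpa using h

/-- the local-permutation-at-the-root homomorphism `W_H → Sym(m)`. -/
noncomputable def rootHom (m : ℕ) (H : Subgroup (Equiv.Perm (Fin m))) :
    ↥(wreath m H) →* Equiv.Perm (Fin m) where
  toFun := rootSec
  map_one' := Equiv.ext fun x => by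
    apply singleton_inj
    rw [← rootSec_spec 1 x]
    rfl
  map_mul' f g := Equiv.ext fun x => by
    apply singleton_inj
    rw [← rootSec_spec (f * g) x]
    show (f : Equiv.Perm (Vtx m)) ((g : Equiv.Perm (Vtx m)) [x]) = _
    rw [rootSec_spec g x, rootSec_spec f (rootSec g x)]
    rfl

lemma ker_rootHom : (rootHom m H).ker = (levelStab m 1).subgroupOf (wreath m H) := by
  ext f
  rw [MonoidHom.mem_ker, Subgroup.mem_subgroupOf, mem_levelStab_iff]
  constructor
  · intro h v hv
    match v with
    | [] => exact f.2.1
    | [x] =>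
        rw [rootSec_spec f x, show rootSec f = 1 from h]
        rfl
    | x :: y :: w => simp at hv
  · intro h
    refine Equiv.ext fun x => ?_
    show rootSec f x = _
    apply singleton_inj
    rw [← rootSec_spec f x, h [x] (by simp)]
    rfl

lemma range_rootHom : (rootHom m H).range = H := by
  apply le_antisymm
  · rintro _ ⟨f, rfl⟩
    exact rootSec_mem f
  · intro σ hσ
    refine ⟨⟨rootedPerm m σ, rootedPerm_mem_wreath hσ⟩, Equiv.ext fun x => ?_⟩
    show rootSec _ x = σ x
    apply singleton_inj
    rw [← rootSec_spec]
    rfl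

lemma relIndex_levelStab_one :
    (levelStab m 1).relIndex (wreath m H) = Nat.card ↥H := by
  rw [Subgroup.relIndex, ← ker_rootHom, Subgroup.index_ker, range_rootHom]

end St12
namespace St12

open Subgroup

variable {m : ℕ} {H : Subgroup (Equiv.Perm (Fin m))} {K : Subgroup (Equiv.Perm (Vtx m))}

def piSubtype (m : ℕ) (H : Subgroup (Equiv.Perm (Fin m))) :
    (∀ _ : Fin m, ↥(wreath m H)) →* (Fin m → Equiv.Perm (Vtx m)) where
  toFun g x := ↑(g x)
  map_one' := rfl
  map_mul' g h := rfl

lemma map_piSubtype_top :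
    (⊤ : Subgroup (∀ _ : Fin m, ↥(wreath m H))).map (piSubtype m H) =
      Subgroup.pi Set.univ (fun _ => wreath m H) := by
  ext p
  simp only [Subgroup.mem_map, Subgroup.mem_top, true_and, Subgroup.mem_pi, Set.mem_univ,
    forall_true_left]
  constructor
  · rintro ⟨g, rfl⟩ x
    exact (g x).2
  · intro h
    exact ⟨fun x => ⟨p x, h x⟩, rfl⟩

lemma comap_piSubtype_pi (S : Subgroup (Equiv.Perm (Vtx m))) :
    (Subgroup.pi Set.univ (fun _ : Fin m => S)).comap (piSubtype m H) =
      Subgroup.pi Set.univ (fun _ : Fin m => S.subgroupOf (wreath m H)) := by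
  ext g
  simp [Subgroup.mem_comap, Subgroup.mem_pi, Subgroup.mem_subgroupOf, piSubtype]

lemma relIndex_pi_pi (S : Subgroup (Equiv.Perm (Vtx m))) :
    (Subgroup.pi Set.univ (fun _ : Fin m => S)).relIndex
        (Subgroup.pi Set.univ (fun _ : Fin m => wreath m H)) =
      (S.relIndex (wreath m H)) ^ m := by
  rw [← map_piSubtype_top, ← Subgroup.relIndex_comap, comap_piSubtype_pi,
    Subgroup.relIndex_top_right, Subgroup.index_pi]
  simp [Subgroup.relIndex]

def sgeo (m n : ℕ) : ℕ := ∑ i ∈ Finset.range n, m ^ i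

lemma sgeo_succ (n : ℕ) : sgeo m (n + 1) = m * sgeo m n + 1 := by
  unfold sgeo
  rw [Finset.sum_range_succ']
  simp [pow_succ, Finset.mul_sum, mul_comm]

lemma sgeo_le (n : ℕ) (hm : 1 ≤ m) : n ≤ sgeo m n := by
  induction n with
  | zero => simp [sgeo]
  | succ n ih =>
      rw [sgeo_succ]
      have : sgeo m n ≤ m * sgeo m n := Nat.le_mul_of_pos_left _ hm
      omega

lemma relIndex_wreath (n : ℕ) :
    (levelStab m n).relIndex (wreath m H) = (Nat.card ↥H) ^ (sgeo m n) := by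
  induction n with
  | zero =>
      have hle : wreath m H ≤ levelStab m 0 := fun f hf => mem_levelStab_iff.mpr
        (fun v hv => by
          have hv' : v = [] := List.length_eq_zero_iff.mp (Nat.le_zero.mp hv)
          rw [hv']
          exact hf.1)
      rw [Subgroup.relIndex_eq_one.mpr hle]
      simp [sgeo]
  | succ n ih =>
      have h1 : levelStab m (n + 1) ≤ levelStab m 1 := levelStab_antitone (by omega)
      have hAB : levelStab m (n + 1) ⊓ wreath m H ≤ wreath m H ⊓ levelStab m 1 :=
        le_inf inf_le_right (le_trans inf_le_left h1)
      have hA : levelStab m (n + 1) ⊓ (wreath m H ⊓ levelStab m 1) =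
          levelStab m (n + 1) ⊓ wreath m H := by
        rw [inf_comm (wreath m H), ← inf_assoc, inf_eq_left.mpr h1]
      calc (levelStab m (n + 1)).relIndex (wreath m H)
          = (levelStab m (n + 1) ⊓ wreath m H).relIndex (wreath m H) :=
            (Subgroup.inf_relIndex_right _ _).symm
        _ = (levelStab m (n + 1) ⊓ wreath m H).relIndex (wreath m H ⊓ levelStab m 1) *
              (wreath m H ⊓ levelStab m 1).relIndex (wreath m H) :=
            (Subgroup.relIndex_mul_relIndex _ _ _ hAB inf_le_left).symm
        _ = (levelStab m (n + 1)).relIndex (wreath m H ⊓ levelStab m 1) *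
              (levelStab m 1).relIndex (wreath m H) := by
            rw [← hA, Subgroup.inf_relIndex_right, inf_comm (wreath m H),
              Subgroup.inf_relIndex_right]
        _ = ((levelStab m n).relIndex (wreath m H)) ^ m * Nat.card ↥H := by
            rw [← map_theta_pi, ← Subgroup.relIndex_comap, comap_theta_levelStab,
              relIndex_pi_pi, relIndex_levelStab_one]
        _ = (Nat.card ↥H) ^ (sgeo m (n + 1)) := by
            rw [ih, ← pow_mul, sgeo_succ, pow_add, pow_one, mul_comm (sgeo m n) m]

def prodSubtype (H : Subgroup (Equiv.Perm (Fin m))) (K : Subgroup (Equiv.Perm (Vtx m))) :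
    ↥H × ↥K →* Equiv.Perm (Fin m) × Equiv.Perm (Vtx m) :=
  (H.subtype).prodMap (K.subtype)

lemma map_prodSubtype_top :
    (⊤ : Subgroup (↥H × ↥K)).map (prodSubtype H K) = H.prod K := by
  ext p
  simp only [Subgroup.mem_map, Subgroup.mem_top, true_and, Subgroup.mem_prod]
  constructor
  · rintro ⟨⟨a, b⟩, rfl⟩
    exact ⟨a.2, b.2⟩
  · rintro ⟨h1, h2⟩
    exact ⟨(⟨p.1, h1⟩, ⟨p.2, h2⟩), rfl⟩

lemma comap_prodSubtype (S : Subgroup (Equiv.Perm (Vtx m))) :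
    ((⊥ : Subgroup (Equiv.Perm (Fin m))).prod S).comap (prodSubtype H K) =
      (⊥ : Subgroup ↥H).prod (S.subgroupOf K) := by
  ext ⟨a, b⟩
  simp [Subgroup.mem_comap, Subgroup.mem_prod, Subgroup.mem_subgroupOf, prodSubtype,
    Subgroup.mem_bot]

lemma relIndex_diagGroup (hm : 2 ≤ m) (n : ℕ) :
    (levelStab m (n + 1)).relIndex (diagGroup m H K) =
      Nat.card ↥H * (levelStab m n).relIndex K := by
  rw [diagGroup_eq_map, ← Subgroup.relIndex_comap, comap_psi0_levelStab hm,
    ← map_prodSubtype_top (H := H) (K := K), ← Subgroup.relIndex_comap, comap_prodSubtype,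
    Subgroup.relIndex_top_right, Subgroup.index_prod, Subgroup.index_bot]
  rfl

end St12
namespace St12

open Filter

lemma bdd_ge_of (f : ℕ → ℝ) (b : ℝ) (h : ∀ n, b ≤ f n) :
    Filter.IsBoundedUnder (· ≥ ·) Filter.atTop f :=
  Filter.isBoundedUnder_of ⟨b, fun n => h n⟩

lemma bdd_le_of (f : ℕ → ℝ) (B : ℝ) (h : ∀ n, f n ≤ B) :
    Filter.IsBoundedUnder (· ≤ ·) Filter.atTop f :=
  Filter.isBoundedUnder_of ⟨B, fun n => h n⟩

lemma cobdd_ge_of (f : ℕ → ℝ) (B : ℝ) (h : ∀ n, f n ≤ B) :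
    Filter.IsCoboundedUnder (· ≥ ·) Filter.atTop f :=
  (bdd_le_of f B h).isCoboundedUnder_ge

lemma liminf_div_const (f : ℕ → ℝ) {c : ℝ} (hc : 0 < c) (h0 : ∀ n, 0 ≤ f n)
    (h1 : ∀ n, f n ≤ 1) :
    Filter.liminf (fun n => f n / c) Filter.atTop = Filter.liminf f Filter.atTop / c := by
  have hmono : Monotone (fun x : ℝ => x / c) := fun a b h => by
    simp only []
    gcongr
  exact (hmono.map_liminf_of_continuousAt f ((continuous_id.div_const c).continuousAt)
    (cobdd_ge_of f 1 h1) (bdd_ge_of f 0 h0)).symm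

lemma liminf_add_tendsto_zero {f e : ℕ → ℝ} (h0 : ∀ n, 0 ≤ f n) (h1 : ∀ n, f n ≤ 1)
    (he : Filter.Tendsto e Filter.atTop (nhds 0)) :
    Filter.liminf (fun n => f n + e n) Filter.atTop = Filter.liminf f Filter.atTop := by
  have hfbd : Filter.IsBoundedUnder (· ≥ ·) Filter.atTop f := bdd_ge_of f 0 h0
  have hfco : Filter.IsCoboundedUnder (· ≥ ·) Filter.atTop f := cobdd_ge_of f 1 h1
  refine le_antisymm ?_ ?_
  · refine le_of_forall_pos_le_add fun ε hε => ?_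
    have heε : ∀ᶠ n in Filter.atTop, e n ≤ ε := (he.eventually_lt_const hε).mono
      fun n h => le_of_lt h
    have hev : ∀ᶠ n in Filter.atTop, f n + e n ≤ f n + ε := heε.mono
      fun n h => by linarith
    have hsum_bd : Filter.IsBoundedUnder (· ≥ ·) Filter.atTop (fun n => f n + e n) := by
      refine ⟨-1, ?_⟩
      rw [Filter.eventually_map]
      filter_upwards [he.eventually_const_lt (by norm_num : (-1 : ℝ) < 0)] with n hn
      have := h0 n
      linarith
    have hco : Filter.IsCoboundedUnder (· ≥ ·) Filter.atTop (fun n => f n + ε) :=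
      cobdd_ge_of _ (1 + ε) fun n => by have := h1 n; linarith
    have h := Filter.liminf_le_liminf hev hsum_bd hco
    rwa [liminf_add_const Filter.atTop f ε hfco hfbd] at h
  · refine le_of_forall_pos_le_add fun ε hε => ?_
    have heε : ∀ᶠ n in Filter.atTop, f n + (-ε) ≤ f n + e n :=
      (he.eventually_const_lt (by linarith : -ε < (0 : ℝ))).mono fun n h => by linarith
    have hbd : Filter.IsBoundedUnder (· ≥ ·) Filter.atTop (fun n => f n + (-ε)) :=
      bdd_ge_of _ (-ε) fun n => by have := h0 n; linarith
    have hco : Filter.IsCoboundedUnder (· ≥ ·) Filter.atTop (fun n => f n + e n) := by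
      refine (Filter.IsBoundedUnder.isCoboundedUnder_ge ?_)
      refine ⟨1 + 1, ?_⟩
      rw [Filter.eventually_map]
      filter_upwards [he.eventually_lt_const (by norm_num : (0 : ℝ) < 1)] with n hn
      have := h1 n
      linarith
    have h := Filter.liminf_le_liminf heε hbd hco
    rw [liminf_add_const Filter.atTop f (-ε) hfco hfbd] at h
    linarith

end St12
namespace St12

open Subgroup

variable {m : ℕ} {H : Subgroup (Equiv.Perm (Fin m))} {K : Subgroup (Equiv.Perm (Vtx m))}

lemma diag_inf (hKW : K ≤ wreath m H) :
    diagGroup m H K ⊓ levelStab m 1 = diagSub m K := by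
  apply le_antisymm
  · intro f hf
    rw [Subgroup.mem_inf] at hf
    obtain ⟨hfG, hf1⟩ := hf
    rw [diagGroup_eq_map] at hfG
    obtain ⟨⟨σ, k⟩, ⟨hσ, hk⟩, rfl⟩ := hfG
    rw [mem_levelStab_iff] at hf1
    have hk0 : k [] = [] := (hKW hk).1
    have hσ1 : σ = 1 := by
      refine Equiv.ext fun x => ?_
      have h2 : σ x :: k [] = [x] := hf1 [x] (by simp)
      rw [hk0] at h2
      simpa using h2
    subst hσ1
    exact ⟨rfl, k, hk, fun x u => by simp⟩
  · intro f hf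
    obtain ⟨h0, k, hk, hfc⟩ := hf
    refine Subgroup.mem_inf.mpr ⟨Subgroup.mem_sup_right ⟨h0, k, hk, hfc⟩, ?_⟩
    rw [mem_levelStab_iff]
    intro v hv
    match v with
    | [] => exact h0
    | [x] => rw [hfc x [], (hKW hk).1]
    | x :: y :: w => simp at hv

end St12
/-- For `G_K = ⟨H, D_m(K)⟩` one has `St_{G_K}(1) = D_m(K)` and, for
every `n ≥ 1`, `|G_K : St_{G_K}(n)| = |H| · |K : St_K(n-1)|` (the logarithmic identity
`log|G_K : St_{G_K}(n)| = log|H| + log|K : St_K(n−1)|`).  Consequently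
`hdim_{W_H}(G_K) = hdim_{W_H}(K)/m`, and if `K` has strong Hausdorff dimension in `W_H`
then so does `G_K`. -/
theorem statement12 (m : ℕ) (hm : 2 ≤ m) (H : Subgroup (Equiv.Perm (Fin m)))
    (hHtrans : ∀ x y : Fin m, ∃ σ ∈ H, σ x = y)
    (K : Subgroup (Equiv.Perm (Vtx m))) (hKW : K ≤ wreath m H) (hKcl : IsTreeClosed m K) :
    diagGroup m H K ⊓ levelStab m 1 = diagSub m K ∧
    (∀ n : ℕ, 1 ≤ n → (levelStab m n).relIndex (diagGroup m H K) =
      Nat.card ↥H * (levelStab m (n - 1)).relIndex K) ∧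
    hdimIn m (wreath m H) (diagGroup m H K) = hdimIn m (wreath m H) K / m ∧
    (∀ d : ℝ, hasStrongHdim m (wreath m H) K d →
      hasStrongHdim m (wreath m H) (diagGroup m H K) (d / m)) := by
  classical
  have hm1 : (1 : ℝ) ≤ (m : ℝ) := by exact_mod_cast (by omega : 1 ≤ m)
  have hm0 : (0 : ℝ) < (m : ℝ) := by exact_mod_cast (by omega : 0 < m)
  have hcard2 : 2 ≤ Nat.card ↥H := by
    have hne : H ≠ ⊥ := by
      obtain ⟨σ, hσ, hσ01⟩ := hHtrans ⟨0, by omega⟩ ⟨1, by omega⟩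
      intro hbot
      rw [hbot, Subgroup.mem_bot] at hσ
      subst hσ
      exact absurd hσ01 (by simp [Fin.ext_iff])
    have h1 := (Subgroup.one_lt_card_iff_ne_bot (H := H)).mpr hne
    omega
  have hcH0 : Nat.card ↥H ≠ 0 := by omega
  have hcHR : (1 : ℝ) < (Nat.card ↥H : ℝ) := by exact_mod_cast (by omega : 1 < Nat.card ↥H)
  have hc : 0 < Real.log (Nat.card ↥H) := Real.log_pos hcHR
  set c : ℝ := Real.log (Nat.card ↥H) with hcdef
  -- part 1
  have part1 := St12.diag_inf (H := H) hKW
  -- part 2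
  have p2raw : ∀ n : ℕ, (levelStab m (n + 1)).relIndex (diagGroup m H K) =
      Nat.card ↥H * (levelStab m n).relIndex K := fun n => St12.relIndex_diagGroup hm n
  have part2 : ∀ n : ℕ, 1 ≤ n → (levelStab m n).relIndex (diagGroup m H K) =
      Nat.card ↥H * (levelStab m (n - 1)).relIndex K := by
    intro n hn
    obtain ⟨n', rfl⟩ : ∃ n', n = n' + 1 := ⟨n - 1, by omega⟩
    simpa using p2raw n'
  -- denominators
  have hWne : ∀ n, (levelStab m n).relIndex (wreath m H) ≠ 0 := fun n => by
    rw [St12.relIndex_wreath]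
    exact pow_ne_zero _ hcH0
  have hden : ∀ n : ℕ, Real.log ((levelStab m n).relIndex (wreath m H) : ℝ) =
      (St12.sgeo m n : ℝ) * c := by
    intro n
    rw [St12.relIndex_wreath]
    push_cast
    rw [Real.log_pow]
  have hKne : ∀ n, (levelStab m n).relIndex K ≠ 0 := fun n h =>
    hWne n (Subgroup.relIndex_eq_zero_of_le_right hKW h)
  have hKle : ∀ n, (levelStab m n).relIndex K ≤ (levelStab m n).relIndex (wreath m H) :=
    fun n => Subgroup.relIndex_le_of_le_right hKW (hWne n)
  set L : ℕ → ℝ := fun n => Real.log ((levelStab m n).relIndex K : ℝ) with hLdef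
  have hL0 : ∀ n, 0 ≤ L n := fun n =>
    Real.log_nonneg (by exact_mod_cast Nat.one_le_iff_ne_zero.mpr (hKne n))
  have hLle : ∀ n, L n ≤ (St12.sgeo m n : ℝ) * c := by
    intro n
    rw [← hden n]
    have hpos : (0 : ℝ) < ((levelStab m n).relIndex K : ℝ) := by
      exact_mod_cast Nat.pos_of_ne_zero (hKne n)
    have hle : ((levelStab m n).relIndex K : ℝ) ≤
        ((levelStab m n).relIndex (wreath m H) : ℝ) := by exact_mod_cast hKle n
    exact Real.log_le_log hpos hle
  set rKf : ℕ → ℝ := fun n => Real.log ((levelStab m n).relIndex K : ℝ) /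
      Real.log ((levelStab m n).relIndex (wreath m H) : ℝ) with hrKfdef
  set aGf : ℕ → ℝ := fun n => Real.log ((levelStab m n).relIndex (diagGroup m H K) : ℝ) /
      Real.log ((levelStab m n).relIndex (wreath m H) : ℝ) with haGfdef
  have hrKf : ∀ n, rKf n = L n / ((St12.sgeo m n : ℝ) * c) := by
    intro n
    rw [hrKfdef]
    simp only []
    rw [hden n]
  have hr0 : ∀ n, 0 ≤ rKf n := fun n => by
    rw [hrKf n]
    exact div_nonneg (hL0 n) (by positivity)
  have hr1 : ∀ n, rKf n ≤ 1 := by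
    intro n
    rw [hrKf n]
    rcases Nat.eq_zero_or_pos (St12.sgeo m n) with h | h
    · simp [h]
    · have hpos : (0 : ℝ) < (St12.sgeo m n : ℝ) * c := by
        have h' : (0 : ℝ) < (St12.sgeo m n : ℝ) := by exact_mod_cast h
        positivity
      exact (div_le_one hpos).mpr (hLle n)
  have haG : ∀ n : ℕ, aGf (n + 1) = (c + L n) / ((St12.sgeo m (n + 1) : ℝ) * c) := by
    intro n
    rw [haGfdef]
    simp only []
    rw [hden (n + 1), p2raw n]
    push_cast
    rw [Real.log_mul (by exact_mod_cast hcH0) (by exact_mod_cast hKne n)]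
  set ef : ℕ → ℝ := fun n => aGf (n + 1) - rKf n / m with hefdef
  have hkey : ∀ n : ℕ, 1 ≤ n → |ef n| ≤ 1 / ((n : ℝ) + 1) := by
    intro n hn
    have hS1 : (1 : ℝ) ≤ (St12.sgeo m n : ℝ) := by
      exact_mod_cast le_trans hn (St12.sgeo_le n (by omega))
    have hnS : (n : ℝ) ≤ (St12.sgeo m n : ℝ) := by
      exact_mod_cast St12.sgeo_le n (by omega)
    set S : ℝ := (St12.sgeo m n : ℝ) with hSdef
    have hsucc : (St12.sgeo m (n + 1) : ℝ) = m * S + 1 := by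
      rw [hSdef]
      push_cast [St12.sgeo_succ]
      ring
    have hLu : L n ≤ S * c := hLle n
    have hLb : 0 ≤ L n := hL0 n
    have hP : (0 : ℝ) < m * S * c := by
      apply mul_pos (mul_pos hm0 (by linarith)) hc
    have hQ : (0 : ℝ) < ((m : ℝ) * S + 1) * c := by
      apply mul_pos (by nlinarith) hc
    have heq : ef n = (c * ((m : ℝ) * S * c - L n)) / ((((m : ℝ) * S + 1) * c) * ((m : ℝ) * S * c)) := by
      rw [hefdef]
      simp only []
      rw [haG n, hrKf n, hsucc]
      clear_value S
      rw [← hSdef]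
      field_simp
      ring
    rw [heq, abs_div, abs_of_pos (mul_pos hQ hP)]
    have habs : |c * ((m : ℝ) * S * c - L n)| ≤ c * ((m : ℝ) * S * c) := by
      rw [abs_mul, abs_of_pos hc]
      have h1 : |(m : ℝ) * S * c - L n| ≤ (m : ℝ) * S * c := by
        rw [abs_le]
        constructor
        · nlinarith
        · nlinarith
      exact mul_le_mul_of_nonneg_left h1 hc.le
    calc |c * ((m : ℝ) * S * c - L n)| / ((((m : ℝ) * S + 1) * c) * ((m : ℝ) * S * c))
        ≤ (c * ((m : ℝ) * S * c)) / ((((m : ℝ) * S + 1) * c) * ((m : ℝ) * S * c)) := by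
          gcongr
      _ = 1 / ((m : ℝ) * S + 1) := by
          field_simp
      _ ≤ 1 / ((n : ℝ) + 1) := by
          apply one_div_le_one_div_of_le
          · positivity
          · nlinarith
  have he0 : Filter.Tendsto ef Filter.atTop (nhds 0) := by
    apply squeeze_zero_norm' (a := fun n : ℕ => 1 / ((n : ℝ) + 1)) ?_
      tendsto_one_div_add_atTop_nhds_zero_nat
    filter_upwards [Filter.eventually_ge_atTop 1] with n hn
    simpa [Real.norm_eq_abs] using hkey n hn
  have hfun : (fun n : ℕ => rKf n / (m : ℝ) + ef n) = fun n => aGf (n + 1) := by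
    funext n
    rw [hefdef]
    simp only []
    ring
  have hq0 : ∀ n, 0 ≤ rKf n / (m : ℝ) := fun n => div_nonneg (hr0 n) hm0.le
  have hq1 : ∀ n, rKf n / (m : ℝ) ≤ 1 :=
    fun n => le_trans (div_le_self (hr0 n) hm1) (hr1 n)
  refine ⟨part1, part2, ?_, ?_⟩
  · show Filter.liminf aGf Filter.atTop = Filter.liminf rKf Filter.atTop / m
    rw [← Filter.liminf_nat_add aGf 1, ← hfun,
      St12.liminf_add_tendsto_zero hq0 hq1 he0,
      St12.liminf_div_const rKf hm0 hr0 hr1]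
  · intro d hd
    show Filter.Tendsto aGf Filter.atTop (nhds (d / m))
    have hd' : Filter.Tendsto rKf Filter.atTop (nhds d) := hd
    have h1 : Filter.Tendsto (fun n => rKf n / (m : ℝ) + ef n) Filter.atTop
        (nhds (d / m + 0)) := (hd'.div_const _).add he0
    rw [add_zero, hfun] at h1
    exact (Filter.tendsto_add_atTop_iff_nat 1).mp h1
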